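/- Let d ≥ 2 be an integer. There exists δ₀ > 0, depending only on d, with the following property: for every δ ∈ (0,δ₀), if L = V + a and L' = V' + a' are lines in ℝ^d written in standard form (V, V' ∈ G(d,1), a ∈ V^⊥, a' ∈ V'^⊥) satisfying ‖P_V − P_{V'}‖ ≤ δ and |a − a'| ≥ 4δ, then any points x ∈ L ∩ B(0,1) and x' ∈ L' ∩ B(0,1) satisfy |x − x'| ≥ δ. -/

import Mathlib

open Set Filter Metric Bornology Pointwise

noncomputable section

/-- `coverNum X δ` is `N_δ(X)`: the smallest number of sets of diameter at most `δ`
needed to cover `X`. -/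
def coverNum {α : Type*} [PseudoMetricSpace α] (X : Set α) (δ : ℝ) : ℕ :=
  sInf {n : ℕ | ∃ c : Fin n → Set α, (∀ i, Metric.diam (c i) ≤ δ) ∧ X ⊆ ⋃ i, c i}

/-- The upper box dimension: `limsup_{δ → 0⁺} log N_δ(X) / (- log δ)`. -/
def ubDim {α : Type*} [PseudoMetricSpace α] (X : Set α) : ℝ :=
  Filter.limsup (fun δ : ℝ => Real.log (coverNum X δ) / -Real.log δ) (nhdsWithin 0 (Set.Ioi 0))

/-- The lower box dimension: `liminf_{δ → 0⁺} log N_δ(X) / (- log δ)`. -/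
def lbDim {α : Type*} [PseudoMetricSpace α] (X : Set α) : ℝ :=
  Filter.liminf (fun δ : ℝ => Real.log (coverNum X δ) / -Real.log δ) (nhdsWithin 0 (Set.Ioi 0))

/-- The packing dimension: the infimum over countable decompositions of `X` into non-empty
bounded pieces of the supremum of the upper box dimensions of the pieces. -/
def packDim {α : Type*} [PseudoMetricSpace α] (X : Set α) : ℝ :=
  sInf { r : ℝ | ∃ F : ℕ → Set α, (X ⊆ ⋃ i, F i) ∧
    (∀ i, (F i).Nonempty ∧ Bornology.IsBounded (F i)) ∧ r = ⨆ i, ubDim (F i) }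

/-- The orthogonal projection onto a subspace `V` of `ℝ^d`, as an operator `ℝ^d → ℝ^d`. -/
def projL {d : ℕ} (V : Submodule ℝ (EuclideanSpace ℝ (Fin d))) :
    EuclideanSpace ℝ (Fin d) →L[ℝ] EuclideanSpace ℝ (Fin d) :=
  V.subtypeL.comp (V.orthogonalProjection)

/-- A line in `ℝ^d`, in standard form: a direction `V ∈ G(d,1)` together with a translation
`a ∈ V^⊥`.  This is the affine Grassmannian `A(d,1)`. -/
structure AffLine (d : ℕ) where
  dir : Submodule ℝ (EuclideanSpace ℝ (Fin d))
  finrank_dir : Module.finrank ℝ dir = 1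
  pt : EuclideanSpace ℝ (Fin d)
  pt_mem : pt ∈ dirᗮ

/-- The line `V + a` as a subset of `ℝ^d`. -/
def AffLine.carrier {d : ℕ} (L : AffLine d) : Set (EuclideanSpace ℝ (Fin d)) :=
  {x | x - L.pt ∈ L.dir}

/-- The metric `d₁(V + a, V' + a') = ‖P_V - P_{V'}‖ + |a - a'|` on `A(d,1)`. -/
instance {d : ℕ} : PseudoMetricSpace (AffLine d) where
  dist L L' := ‖projL L.dir - projL L'.dir‖ + dist L.pt L'.pt
  dist_self L := by
    show ‖projL L.dir - projL L.dir‖ + dist L.pt L.pt = 0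
    rw [sub_self, norm_zero, dist_self, add_zero]
  dist_comm L L' := by
    show ‖projL L.dir - projL L'.dir‖ + dist L.pt L'.pt
      = ‖projL L'.dir - projL L.dir‖ + dist L'.pt L.pt
    rw [norm_sub_rev, dist_comm]
  dist_triangle L L' L'' := by
    show ‖projL L.dir - projL L''.dir‖ + dist L.pt L''.pt
      ≤ (‖projL L.dir - projL L'.dir‖ + dist L.pt L'.pt)
        + (‖projL L'.dir - projL L''.dir‖ + dist L'.pt L''.pt)
    have h1 : ‖projL L.dir - projL L''.dir‖ ≤
        ‖projL L.dir - projL L'.dir‖ + ‖projL L'.dir - projL L''.dir‖ :=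
      norm_sub_le_norm_sub_add_norm_sub _ _ _
    have h2 := dist_triangle L.pt L'.pt L''.pt
    linarith

end

/-- **Geometric separation lemma.**  There is `δ₀ > 0`, depending only on `d`, such that for
all `δ ∈ (0, δ₀)`: if two lines `L = V + a` and `L' = V' + a'` in standard form satisfy
`‖P_V - P_{V'}‖ ≤ δ` and `|a - a'| ≥ 4δ`, then any `x ∈ L ∩ B(0,1)` and `x' ∈ L' ∩ B(0,1)`
satisfy `|x - x'| ≥ δ`. -/
theorem lines_close_dir_far_trans_separated (d : ℕ) (hd : 2 ≤ d) :
    ∃ δ₀ > (0 : ℝ), ∀ δ ∈ Set.Ioo (0 : ℝ) δ₀, ∀ L L' : AffLine d,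
      ‖projL L.dir - projL L'.dir‖ ≤ δ → 4 * δ ≤ dist L.pt L'.pt →
      ∀ x ∈ L.carrier ∩ Metric.closedBall (0 : EuclideanSpace ℝ (Fin d)) 1,
      ∀ x' ∈ L'.carrier ∩ Metric.closedBall (0 : EuclideanSpace ℝ (Fin d)) 1,
        δ ≤ dist x x' := by
  refine ⟨1, one_pos, ?_⟩
  rintro δ ⟨hδ0, hδ1⟩ L L' hproj hpt x ⟨hxL, hx1⟩ x' ⟨hxL', hx1'⟩
  have key : ∀ (M : AffLine d) (y : EuclideanSpace ℝ (Fin d)), y ∈ M.carrier →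
      projL M.dir y = y - M.pt := by
    intro M y hy
    have h1 : projL M.dir (y - M.pt) = y - M.pt := by
      simp only [projL, ContinuousLinearMap.comp_apply, Submodule.subtypeL_apply]
      exact Submodule.starProjection_eq_self_iff.mpr hy
    have h2 : projL M.dir M.pt = 0 := by
      simp only [projL, ContinuousLinearMap.comp_apply, Submodule.subtypeL_apply]
      rw [Submodule.orthogonalProjectionOnto_apply_of_mem_orthogonal M.pt_mem]
      simp
    have := map_sub (projL M.dir) y M.pt
    rw [h1, h2, sub_zero] at this
    exact this.symm
  have hx : projL L.dir x = x - L.pt := key L x hxL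
  have hx' : projL L'.dir x' = x' - L'.pt := key L' x' hxL'
  have hdecomp : L.pt - L'.pt =
      ((x - x') - projL L.dir (x - x')) - (projL L.dir - projL L'.dir) x' := by
    rw [map_sub, ContinuousLinearMap.sub_apply, hx, hx']
    abel
  have hcontr : ‖(x - x') - projL L.dir (x - x')‖ ≤ ‖x - x'‖ := by
    have : (x - x') - projL L.dir (x - x')
        = (L.dirᗮ.orthogonalProjection (x - x') : EuclideanSpace ℝ (Fin d)) := by
      rw [show (L.dirᗮ.orthogonalProjection (x - x') : EuclideanSpace ℝ (Fin d)) = L.dirᗮ.starProjection (x - x') from rfl, Submodule.starProjection_orthogonal_val]; rfl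
    rw [this]
    calc ‖(L.dirᗮ.orthogonalProjection (x - x') : EuclideanSpace ℝ (Fin d))‖
        ≤ ‖L.dirᗮ.orthogonalProjection‖ * ‖x - x'‖ :=
          (L.dirᗮ.orthogonalProjection).le_opNorm _
      _ ≤ 1 * ‖x - x'‖ := by
          exact mul_le_mul_of_nonneg_right (Submodule.orthogonalProjectionOnto_norm_le _) (norm_nonneg _)
      _ = ‖x - x'‖ := one_mul _
  have hsmall : ‖(projL L.dir - projL L'.dir) x'‖ ≤ δ := by
    calc ‖(projL L.dir - projL L'.dir) x'‖
        ≤ ‖projL L.dir - projL L'.dir‖ * ‖x'‖ := (projL L.dir - projL L'.dir).le_opNorm _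
      _ ≤ δ * 1 := by
          apply mul_le_mul hproj _ (norm_nonneg _) (le_of_lt hδ0)
          simpa using mem_closedBall_zero_iff.mp hx1'
      _ = δ := mul_one _
  have hbound : dist L.pt L'.pt ≤ ‖x - x'‖ + δ := by
    rw [dist_eq_norm, hdecomp]
    calc ‖((x - x') - projL L.dir (x - x')) - (projL L.dir - projL L'.dir) x'‖
        ≤ ‖(x - x') - projL L.dir (x - x')‖ + ‖(projL L.dir - projL L'.dir) x'‖ :=
          norm_sub_le _ _
      _ ≤ ‖x - x'‖ + δ := add_le_add hcontr hsmall
  rw [dist_eq_norm]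
  linarith
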